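/- Let α > 0, k > 1, λ > 0. The integral ∫_0^∞ f_{k,λ}^α(x) dx, where f_{k,λ} is the PDF of the noncentral chi-squared distribution with k degrees of freedom and noncentrality parameter λ, is finite if and only if k > 2 - 2/α. -/

import Mathlib

open Real MeasureTheory Set Filter

/-- Modified Bessel function of the first kind of order `ν`. -/
noncomputable def besselI (ν x : ℝ) : ℝ :=
  ∑' m : ℕ, (1 / ((m.factorial : ℝ) * Real.Gamma ((m : ℝ) + ν + 1))) *
    (x / 2) ^ (2 * (m : ℝ) + ν)

/-- PDF of the noncentral chi-squared distribution with `k` degrees of freedom and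
noncentrality parameter `lam`, for `x > 0`. -/
noncomputable def ncChiSqPDF (k lam x : ℝ) : ℝ :=
  (1 / 2) * Real.exp (-(x + lam) / 2) * (x / lam) ^ (k / 4 - 1 / 2) *
    besselI (k / 2 - 1) (Real.sqrt (lam * x))

/-- PDF of the central chi-squared distribution with `k` degrees of freedom, for `x > 0`. -/
noncomputable def chiSqPDF (k x : ℝ) : ℝ :=
  x ^ (k / 2 - 1) * Real.exp (-x / 2) / (2 ^ (k / 2) * Real.Gamma (k / 2))


lemma myGamma_lb {ν : ℝ} (hν : (-1/2 : ℝ) ≤ ν) (m : ℕ) :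
    Real.Gamma (ν + 1) * m.factorial / 2 ^ m ≤ Real.Gamma ((m : ℝ) + ν + 1) := by
  induction m with
  | zero => simp
  | succ n ih =>
    have hpos : (0:ℝ) < (n : ℝ) + ν + 1 := by
      have : (0:ℝ) ≤ (n : ℝ) := n.cast_nonneg
      linarith
    have h1 : Real.Gamma (((n+1 : ℕ) : ℝ) + ν + 1) = ((n:ℝ) + ν + 1) * Real.Gamma ((n:ℝ) + ν + 1) := by
      push_cast
      rw [show (n:ℝ) + 1 + ν + 1 = ((n:ℝ) + ν + 1) + 1 by ring,
        Real.Gamma_add_one hpos.ne']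
    rw [h1]
    have hGpos : 0 ≤ Real.Gamma (ν + 1) * n.factorial / 2 ^ n := by
      have := Real.Gamma_pos_of_pos (show (0:ℝ) < ν + 1 by linarith)
      positivity
    have h2 : ((n:ℝ) + 1) / 2 ≤ (n:ℝ) + ν + 1 := by linarith [show (0:ℝ) ≤ (n:ℝ) from n.cast_nonneg]
    calc Real.Gamma (ν + 1) * (n+1).factorial / 2 ^ (n+1)
        = (((n:ℝ)+1)/2) * (Real.Gamma (ν + 1) * n.factorial / 2 ^ n) := by
          push_cast [Nat.factorial_succ]; ring
      _ ≤ ((n:ℝ) + ν + 1) * Real.Gamma ((n:ℝ) + ν + 1) := by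
          apply mul_le_mul h2 ih hGpos (le_of_lt hpos)

noncomputable def besselTerm (ν u : ℝ) (m : ℕ) : ℝ :=
  (1 / ((m.factorial : ℝ) * Real.Gamma ((m : ℝ) + ν + 1))) * u ^ m

lemma myGamma_pos {ν : ℝ} (hν : (-1/2 : ℝ) ≤ ν) (m : ℕ) :
    0 < Real.Gamma ((m : ℝ) + ν + 1) := by
  apply Real.Gamma_pos_of_pos
  have : (0:ℝ) ≤ (m : ℝ) := m.cast_nonneg
  linarith

lemma besselTerm_nonneg {ν u : ℝ} (hν : (-1/2 : ℝ) ≤ ν) (hu : 0 ≤ u) (m : ℕ) :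
    0 ≤ besselTerm ν u m := by
  have := myGamma_pos hν m
  have : (0:ℝ) < (m.factorial : ℝ) := by positivity
  unfold besselTerm
  positivity

lemma besselTerm_le {ν u : ℝ} (hν : (-1/2 : ℝ) ≤ ν) (hu : 0 ≤ u) (m : ℕ) :
    besselTerm ν u m ≤ (2*u) ^ m / ((m.factorial : ℝ)^2) * (Real.Gamma (ν+1))⁻¹ := by
  have hfac : (0:ℝ) < (m.factorial : ℝ) := by positivity
  have hG := myGamma_pos hν m
  have hGν : 0 < Real.Gamma (ν + 1) :=
    Real.Gamma_pos_of_pos (by linarith)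
  have hlb := myGamma_lb hν m
  have h1 : 1 / ((m.factorial : ℝ) * Real.Gamma ((m : ℝ) + ν + 1)) ≤
      2 ^ m / ((m.factorial : ℝ)^2 * Real.Gamma (ν+1)) := by
    rw [div_le_iff₀ (by positivity : (0:ℝ) < 2^m)] at hlb
    rw [div_le_div_iff₀ (by positivity) (by positivity)]
    calc (1:ℝ) * ((m.factorial : ℝ)^2 * Real.Gamma (ν+1))
        = (m.factorial : ℝ) * (Real.Gamma (ν+1) * m.factorial) := by ring
      _ ≤ (m.factorial : ℝ) * (Real.Gamma ((m:ℝ) + ν + 1) * 2^m) := by gcongr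
      _ = 2 ^ m * ((m.factorial : ℝ) * Real.Gamma ((m:ℝ) + ν + 1)) := by ring
  calc besselTerm ν u m ≤ (2 ^ m / ((m.factorial : ℝ)^2 * Real.Gamma (ν+1))) * u ^ m := by
        unfold besselTerm
        apply mul_le_mul_of_nonneg_right h1 (by positivity)
    _ = (2*u) ^ m / ((m.factorial : ℝ)^2) * (Real.Gamma (ν+1))⁻¹ := by
        rw [mul_pow]; field_simp

lemma besselTerm_summable {ν u : ℝ} (hν : (-1/2 : ℝ) ≤ ν) (hu : 0 ≤ u) :
    Summable (besselTerm ν u) := by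
  have hGν : 0 < Real.Gamma (ν + 1) := Real.Gamma_pos_of_pos (by linarith)
  refine Summable.of_nonneg_of_le (besselTerm_nonneg hν hu) (fun m => ?_)
    ((Real.summable_pow_div_factorial (2*u)).mul_right (Real.Gamma (ν+1))⁻¹)
  · refine (besselTerm_le hν hu m).trans ?_
    have hfac1 : (1:ℝ) ≤ (m.factorial : ℝ) := by exact_mod_cast m.factorial_pos
    have hd : (2*u)^m/((m.factorial : ℝ)^2) ≤ (2*u)^m/(m.factorial : ℝ) := by
      apply div_le_div_of_nonneg_left (by positivity) (by positivity)
      nlinarith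
    exact mul_le_mul_of_nonneg_right hd (by positivity)

lemma besselTerm_tsum_lower {ν u : ℝ} (hν : (-1/2 : ℝ) ≤ ν) (hu : 0 ≤ u) :
    (Real.Gamma (ν+1))⁻¹ ≤ ∑' m, besselTerm ν u m := by
  have h0 : besselTerm ν u 0 = (Real.Gamma (ν+1))⁻¹ := by
    unfold besselTerm
    simp
  rw [← h0]
  exact Summable.le_tsum (besselTerm_summable hν hu) 0 (fun j _ => besselTerm_nonneg hν hu j)

lemma besselTerm_tsum_upper {ν u : ℝ} (hν : (-1/2 : ℝ) ≤ ν) (hu : 0 ≤ u) :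
    ∑' m, besselTerm ν u m ≤ Real.exp (2 * Real.sqrt (2*u)) / Real.Gamma (ν+1) := by
  set b := Real.sqrt (2*u) with hb
  have hb0 : 0 ≤ b := Real.sqrt_nonneg _
  have hGν : 0 < Real.Gamma (ν + 1) := Real.Gamma_pos_of_pos (by linarith)
  have hexp : ∀ m : ℕ, b ^ m / (m.factorial : ℝ) ≤ Real.exp b := by
    intro m
    calc b ^ m / (m.factorial : ℝ)
        ≤ ∑ i ∈ Finset.range (m+1), b ^ i / (i.factorial : ℝ) := by
          apply Finset.single_le_sum (f := fun i => b ^ i / (i.factorial : ℝ))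
            (fun i _ => by positivity) (Finset.self_mem_range_succ m)
      _ ≤ Real.exp b := Real.sum_le_exp_of_nonneg hb0 _
  have hterm : ∀ m : ℕ, besselTerm ν u m ≤ (b ^ m / (m.factorial : ℝ)) * (Real.exp b * (Real.Gamma (ν+1))⁻¹) := by
    intro m
    refine (besselTerm_le hν hu m).trans ?_
    have hbsq : b^2 = 2*u := Real.sq_sqrt (by linarith)
    have h2u : (2*u) ^ m = (b^m)^2 := by
      rw [← hbsq, ← pow_mul, mul_comm 2 m, pow_mul]
    rw [h2u]
    calc (b^m)^2 / ((m.factorial : ℝ)^2) * (Real.Gamma (ν+1))⁻¹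
        = (b^m / m.factorial) * (b^m / m.factorial) * (Real.Gamma (ν+1))⁻¹ := by
          field_simp
      _ ≤ (b^m / m.factorial) * Real.exp b * (Real.Gamma (ν+1))⁻¹ := by
          have : (0:ℝ) ≤ b^m / m.factorial := by positivity
          gcongr
          exact hexp m
      _ = (b ^ m / (m.factorial : ℝ)) * (Real.exp b * (Real.Gamma (ν+1))⁻¹) := by ring
  have hsum2 : Summable (fun m : ℕ => (b ^ m / (m.factorial : ℝ)) * (Real.exp b * (Real.Gamma (ν+1))⁻¹)) :=
    (Real.summable_pow_div_factorial b).mul_right _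
  calc ∑' m, besselTerm ν u m
      ≤ ∑' m : ℕ, (b ^ m / (m.factorial : ℝ)) * (Real.exp b * (Real.Gamma (ν+1))⁻¹) :=
        Summable.tsum_le_tsum hterm (besselTerm_summable hν hu) hsum2
    _ = (∑' m : ℕ, b ^ m / (m.factorial : ℝ)) * (Real.exp b * (Real.Gamma (ν+1))⁻¹) :=
        tsum_mul_right
    _ ≤ Real.exp b * (Real.exp b * (Real.Gamma (ν+1))⁻¹) := by
        have htsum : (∑' m : ℕ, b ^ m / (m.factorial : ℝ)) ≤ Real.exp b :=
          Real.tsum_le_of_sum_range_le (fun m => by positivity)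
            (fun n => Real.sum_le_exp_of_nonneg hb0 n)
        have : (0:ℝ) ≤ Real.exp b * (Real.Gamma (ν+1))⁻¹ := by positivity
        exact mul_le_mul_of_nonneg_right htsum this
    _ = Real.exp (2 * b) / Real.Gamma (ν+1) := by
        rw [show 2*b = b + b by ring, Real.exp_add]; field_simp

lemma besselTerm_eq {ν t : ℝ} (ht : 0 < t) (m : ℕ) :
    (1 / ((m.factorial : ℝ) * Real.Gamma ((m : ℝ) + ν + 1))) * (t / 2) ^ (2 * (m : ℝ) + ν)
      = besselTerm ν ((t/2)^2) m * (t/2) ^ ν := by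
  have h2 : 0 < t/2 := by linarith
  rw [Real.rpow_add h2, show (2*(m:ℝ)) = ((2*m : ℕ):ℝ) by push_cast; ring,
      Real.rpow_natCast, pow_mul]
  unfold besselTerm; ring

lemma besselI_eq {ν t : ℝ} (ht : 0 < t) :
    besselI ν t = (∑' m, besselTerm ν ((t/2)^2) m) * (t/2) ^ ν := by
  unfold besselI
  rw [← tsum_mul_right]
  exact tsum_congr fun m => besselTerm_eq ht m

lemma besselI_comp_measurable {ν lam : ℝ} (hν : (-1/2 : ℝ) ≤ ν) :
    Measurable fun x : ℝ => besselI ν (Real.sqrt (lam * x)) := by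
  apply measurable_of_tendsto_metrizable' atTop
    (f := fun n x => ∑ m ∈ Finset.range n,
      (1 / ((m.factorial : ℝ) * Real.Gamma ((m : ℝ) + ν + 1))) *
        (Real.sqrt (lam * x) / 2) ^ (2 * (m : ℝ) + ν))
  · intro n
    apply Finset.measurable_sum
    intro m _
    fun_prop
  · rw [tendsto_pi_nhds]
    intro x
    have hsum : Summable fun m : ℕ =>
        (1 / ((m.factorial : ℝ) * Real.Gamma ((m : ℝ) + ν + 1))) *
          (Real.sqrt (lam * x) / 2) ^ (2 * (m : ℝ) + ν) := by
      rcases le_or_gt (lam * x) 0 with h | h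
      · have hs : Real.sqrt (lam * x) = 0 := Real.sqrt_eq_zero'.mpr h
        apply summable_of_ne_finset_zero (s := ({0} : Finset ℕ))
        intro m hm
        have hm1 : 1 ≤ m := Nat.one_le_iff_ne_zero.mpr (by simpa using hm)
        have hmr : (1:ℝ) ≤ (m:ℝ) := by exact_mod_cast hm1
        have hexp : 2 * (m:ℝ) + ν ≠ 0 := by
          have : (0:ℝ) < 2 * (m:ℝ) + ν := by linarith
          exact this.ne'
        rw [hs, show (0:ℝ)/2 = 0 by norm_num, Real.zero_rpow hexp, mul_zero]
      · have ht : 0 < Real.sqrt (lam * x) := Real.sqrt_pos.mpr h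
        have := (besselTerm_summable hν
          (u := (Real.sqrt (lam*x)/2)^2) (by positivity)).mul_right
          ((Real.sqrt (lam*x)/2) ^ ν)
        exact this.congr fun m => (besselTerm_eq ht m).symm
    exact hsum.hasSum.tendsto_sum_nat

lemma ncChiSqPDF_eq {k lam x : ℝ} (hk : 1 < k) (hlam : 0 < lam) (hx : 0 < x) :
    ncChiSqPDF k lam x = (∑' m, besselTerm (k/2-1) (lam*x/4) m) *
      (Real.exp (-(x+lam)/2) * x ^ (k/2-1 : ℝ) / 2 ^ (k/2 : ℝ)) := by
  have hlx : 0 < lam * x := by positivity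
  have ht : 0 < Real.sqrt (lam * x) := Real.sqrt_pos.mpr hlx
  have hA : (Real.sqrt (lam*x)/2)^2 = lam*x/4 := by
    rw [div_pow, Real.sq_sqrt hlx.le]; norm_num
  have hB : (Real.sqrt (lam*x)/2) ^ (k/2-1 : ℝ) =
      (lam*x)^((k/2-1)/2 : ℝ) / 2^(k/2-1 : ℝ) := by
    rw [Real.div_rpow (Real.sqrt_nonneg _) (by norm_num : (0:ℝ) ≤ 2),
      Real.sqrt_eq_rpow, ← Real.rpow_mul hlx.le]
    ring_nf
  have hC : (x/lam) ^ (k/4-1/2 : ℝ) * (lam*x)^((k/2-1)/2 : ℝ) = x ^ (k/2-1 : ℝ) := by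
    rw [show (k/4-1/2 : ℝ) = (k/2-1)/2 by ring,
      ← Real.mul_rpow (by positivity) hlx.le,
      show x/lam*(lam*x) = x^(2:ℕ) by field_simp,
      ← Real.rpow_natCast x 2, ← Real.rpow_mul hx.le]
    congr 1
    push_cast
    ring
  have h2 : (2:ℝ)^(k/2 : ℝ) = 2 * 2^(k/2-1 : ℝ) := by
    have h := Real.rpow_add two_pos 1 (k/2-1)
    rw [Real.rpow_one] at h
    rw [← h]
    congr 1
    ring
  have h2ν : (2:ℝ)^(k/2-1 : ℝ) ≠ 0 := (Real.rpow_pos_of_pos two_pos _).ne'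
  unfold ncChiSqPDF
  rw [besselI_eq ht, hA, hB, h2, ← hC]
  field_simp

theorem integrableOn_ncChiSqPDF_rpow_iff (α k lam : ℝ)
    (hα : 0 < α) (hk : 1 < k) (hlam : 0 < lam) :
    IntegrableOn (fun x => ncChiSqPDF k lam x ^ α) (Ioi (0 : ℝ)) ↔ k > 2 - 2 / α := by
  have hν : (-1/2 : ℝ) ≤ k/2 - 1 := by linarith
  have hG : 0 < Real.Gamma (k/2 - 1 + 1) := Real.Gamma_pos_of_pos (by linarith)
  set c₁ : ℝ := Real.exp (-lam/2) / (2^(k/2 : ℝ) * Real.Gamma (k/2-1+1)) with hc₁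
  set c₂ : ℝ := Real.exp (3*lam/2) / (2^(k/2 : ℝ) * Real.Gamma (k/2-1+1)) with hc₂
  have hc₁pos : 0 < c₁ := by rw [hc₁]; positivity
  have hc₂pos : 0 < c₂ := by rw [hc₂]; positivity
  have hlow : ∀ x : ℝ, 0 < x → c₁ * (x ^ (k/2-1 : ℝ) * Real.exp (-x/2)) ≤ ncChiSqPDF k lam x := by
    intro x hx
    rw [ncChiSqPDF_eq hk hlam hx]
    have hfac : (0:ℝ) ≤ Real.exp (-(x+lam)/2) * x ^ (k/2-1:ℝ) / 2 ^ (k/2:ℝ) := by positivity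
    calc c₁ * (x ^ (k/2-1:ℝ) * Real.exp (-x/2))
        = (Real.Gamma (k/2-1+1))⁻¹ *
            (Real.exp (-(x+lam)/2) * x ^ (k/2-1:ℝ) / 2 ^ (k/2:ℝ)) := by
          rw [hc₁, show (-(x+lam)/2 : ℝ) = -x/2 + -lam/2 by ring, Real.exp_add]
          have h2k : (2:ℝ)^(k/2:ℝ) ≠ 0 := (Real.rpow_pos_of_pos two_pos _).ne'
          field_simp
      _ ≤ _ := mul_le_mul_of_nonneg_right (besselTerm_tsum_lower hν (by positivity)) hfac
  have hup : ∀ x : ℝ, 0 < x → ncChiSqPDF k lam x ≤ c₂ * (x ^ (k/2-1:ℝ) * Real.exp (-x/4)) := by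
    intro x hx
    rw [ncChiSqPDF_eq hk hlam hx]
    have hfac : (0:ℝ) ≤ Real.exp (-(x+lam)/2) * x ^ (k/2-1:ℝ) / 2 ^ (k/2:ℝ) := by positivity
    have hsq : 2 * Real.sqrt (2*(lam*x/4)) ≤ x/4 + 2*lam := by
      have h1 : Real.sqrt (2*(lam*x/4)) ≤ (x/4 + 2*lam)/2 := by
        rw [show (x/4+2*lam)/2 = Real.sqrt (((x/4+2*lam)/2)^2) from
          (Real.sqrt_sq (by positivity)).symm]
        apply Real.sqrt_le_sqrt
        nlinarith [sq_nonneg (x/4 - 2*lam)]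
      linarith
    calc (∑' m, besselTerm (k/2-1) (lam*x/4) m) *
          (Real.exp (-(x+lam)/2) * x ^ (k/2-1:ℝ) / 2 ^ (k/2:ℝ))
        ≤ (Real.exp (2 * Real.sqrt (2*(lam*x/4))) / Real.Gamma (k/2-1+1)) *
            (Real.exp (-(x+lam)/2) * x ^ (k/2-1:ℝ) / 2 ^ (k/2:ℝ)) :=
          mul_le_mul_of_nonneg_right (besselTerm_tsum_upper hν (by positivity)) hfac
      _ ≤ (Real.exp (x/4 + 2*lam) / Real.Gamma (k/2-1+1)) *
            (Real.exp (-(x+lam)/2) * x ^ (k/2-1:ℝ) / 2 ^ (k/2:ℝ)) := by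
          have := Real.exp_le_exp.mpr hsq
          gcongr
      _ = (Real.exp (x/4 + 2*lam) * Real.exp (-(x+lam)/2)) *
            (x ^ (k/2-1:ℝ) / (2^(k/2:ℝ) * Real.Gamma (k/2-1+1))) := by ring
      _ = c₂ * (x ^ (k/2-1:ℝ) * Real.exp (-x/4)) := by
          rw [← Real.exp_add, show (x/4 + 2*lam + -(x+lam)/2 : ℝ) = 3*lam/2 + -x/4 by ring,
            Real.exp_add, hc₂]
          ring
  have hkey : (2 - 2/α < k) ↔ (-1 < α * (k/2 - 1)) := by
    constructor
    · intro h
      have h1 : 2 - k < 2/α := by linarith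
      have h2 : (2-k) * α < 2 := (lt_div_iff₀ hα).mp h1
      nlinarith
    · intro h
      have h2 : (2-k) * α < 2 := by nlinarith
      have h1 : 2 - k < 2/α := (lt_div_iff₀ hα).mpr h2
      linarith
  constructor
  · intro h
    rw [gt_iff_lt, hkey]
    by_contra hcon
    push_neg at hcon
    set d : ℝ := c₁ * Real.exp (-(1:ℝ)/2) with hd
    have hdpos : 0 < d := by rw [hd]; positivity
    have h1 : IntegrableOn (fun x => ncChiSqPDF k lam x ^ α) (Ioo (0:ℝ) 1) :=
      h.mono_set Ioo_subset_Ioi_self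
    have h2 : IntegrableOn (fun x : ℝ => x ^ (α * (k/2-1))) (Ioo (0:ℝ) 1) := by
      apply Integrable.mono' (h1.const_mul ((d ^ α)⁻¹))
      · exact ((by fun_prop : Measurable fun x : ℝ => x ^ (α * (k/2-1)))).aestronglyMeasurable
      · filter_upwards [ae_restrict_mem measurableSet_Ioo] with x hx
        obtain ⟨hx0, hx1⟩ := hx
        have hlx : d * x ^ (k/2-1:ℝ) ≤ ncChiSqPDF k lam x := by
          refine le_trans ?_ (hlow x hx0)
          rw [hd, mul_assoc]
          have hee : Real.exp (-(1:ℝ)/2) * x ^ (k/2-1:ℝ) ≤ x ^ (k/2-1:ℝ) * Real.exp (-x/2) := by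
            rw [mul_comm]
            have : Real.exp (-(1:ℝ)/2) ≤ Real.exp (-x/2) := Real.exp_le_exp.mpr (by linarith)
            exact mul_le_mul_of_nonneg_left this (Real.rpow_nonneg hx0.le _)
          exact mul_le_mul_of_nonneg_left hee hc₁pos.le
        have hb : d ^ α * x ^ (α*(k/2-1)) ≤ ncChiSqPDF k lam x ^ α := by
          calc d ^ α * x ^ (α*(k/2-1)) = (d * x ^ (k/2-1:ℝ)) ^ α := by
                rw [Real.mul_rpow hdpos.le (Real.rpow_nonneg hx0.le _),
                  ← Real.rpow_mul hx0.le, mul_comm (k/2-1) α]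
            _ ≤ ncChiSqPDF k lam x ^ α := Real.rpow_le_rpow (by positivity) hlx hα.le
        rw [Real.norm_eq_abs, abs_of_nonneg (Real.rpow_nonneg hx0.le _)]
        rw [← mul_le_mul_iff_right₀ (Real.rpow_pos_of_pos hdpos α), mul_inv_cancel_left₀
          (Real.rpow_pos_of_pos hdpos α).ne']
        exact hb
    have := (intervalIntegral.integrableOn_Ioo_rpow_iff one_pos).mp h2
    linarith
  · intro h
    have hs : (-1:ℝ) < α * (k/2-1) := hkey.mp h
    have hb : (0:ℝ) < α/4 := by linarith
    have hint : IntegrableOn (fun x : ℝ => x ^ (α*(k/2-1)) * Real.exp (-(α/4) * x)) (Ioi (0:ℝ)) := by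
      have := integrableOn_rpow_mul_exp_neg_mul_rpow hs one_pos hb
      simpa [Real.rpow_one] using this
    have hmeas : Measurable (fun x => ncChiSqPDF k lam x ^ α) := by
      have hb := besselI_comp_measurable (ν := k/2-1) (lam := lam) hν
      unfold ncChiSqPDF
      fun_prop
    apply Integrable.mono' (hint.const_mul (c₂ ^ α))
    · exact hmeas.aestronglyMeasurable
    · filter_upwards [ae_restrict_mem measurableSet_Ioi] with x hx
      have hx0 : 0 < x := hx
      have hf0 : 0 ≤ ncChiSqPDF k lam x := le_trans (by positivity) (hlow x hx0)
      rw [Real.norm_eq_abs, abs_of_nonneg (Real.rpow_nonneg hf0 α)]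
      calc ncChiSqPDF k lam x ^ α ≤ (c₂ * (x ^ (k/2-1:ℝ) * Real.exp (-x/4)))^α :=
            Real.rpow_le_rpow hf0 (hup x hx0) hα.le
        _ = c₂ ^ α * (x ^ (α*(k/2-1)) * Real.exp (-(α/4) * x)) := by
            rw [Real.mul_rpow hc₂pos.le (by positivity),
              Real.mul_rpow (Real.rpow_nonneg hx0.le _) (Real.exp_pos _).le,
              ← Real.rpow_mul hx0.le, ← Real.exp_mul]
            ring_nf
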